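/- Let λ have exactly n parts and let T ∈ LR(λ/μ,ν) be a Littlewood–Richardson tableau. Then the deletion operator δ_{n,λ_n} starting at the corner (n,λ_n) maps T to a Littlewood–Richardson tableau T' with: T' ∈ LR((λ−ε_n)/μ, ν−ε_n) if ν_n > 0 (the corner contains n and is simply removed); T' ∈ LR((λ−ε_n)/(μ−ε_k), ν) for some 1 ≤ k < n if ν_n = 0 and λ_n > μ_n (type (ii) deletion with terminating row k); and T' ∈ LR((λ−ε_n)/(μ−ε_n), ν) if ν_n = 0 and λ_n = μ_n (removal of an empty corner cell). -/

import Mathlib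

/-- `f` is a partition given as a weakly decreasing function on positive indices. -/
def IsPartitionFun (f : ℕ → ℕ) : Prop := ∀ r : ℕ, 1 ≤ r → f (r + 1) ≤ f r

/-- Rows weakly increase; the tableau is extended by `0` on the cells of the inner shape. -/
def RowWeak (lam : ℕ → ℕ) (T : ℕ → ℕ → ℕ) : Prop :=
  ∀ r c : ℕ, 1 ≤ r → 1 ≤ c → c < lam r → T r c ≤ T r (c + 1)

/-- Columns strictly increase on the skew cells. -/
def ColStrict (lam mu : ℕ → ℕ) (T : ℕ → ℕ → ℕ) : Prop :=
  ∀ r c : ℕ, 1 ≤ r → mu r < c → c ≤ lam (r + 1) → T r c < T (r + 1) c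

/-- A cell of the outer shape carries the entry `0` exactly when it lies in the inner
shape (the zero-extension convention for skew tableaux). -/
def ZeroIffInner (lam mu : ℕ → ℕ) (T : ℕ → ℕ → ℕ) : Prop :=
  ∀ r c : ℕ, 1 ≤ r → 1 ≤ c → c ≤ lam r → (T r c = 0 ↔ c ≤ mu r)

/-- The number of cells in row `r` of the skew shape `lam/mu` carrying the entry `s`. -/
def RowCount (lam mu : ℕ → ℕ) (T : ℕ → ℕ → ℕ) (s r : ℕ) : ℕ :=
  ((Finset.Ioc (mu r) (lam r)).filter (fun c => T r c = s)).card

/-- The lattice permutation property. -/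
def LatticeProp (lam mu : ℕ → ℕ) (T : ℕ → ℕ → ℕ) : Prop :=
  ∀ r s : ℕ, 1 ≤ r → 2 ≤ s →
    ∑ r' ∈ Finset.Icc 1 r, RowCount lam mu T s r' ≤
      ∑ r' ∈ Finset.Icc 1 (r - 1), RowCount lam mu T (s - 1) r'

/-- A Sagan–Stanley type deletion path for the deletion starting at the corner
`(r, lam r)` and terminating in row `t`: `p k` is the column of the path in row `k`;
in each row the bumped entry replaces the rightmost strictly smaller entry, and the
process stops when an empty cell (entry `0`) is reached. -/
def DeletionPath (lam : ℕ → ℕ) (T : ℕ → ℕ → ℕ) (r t : ℕ) (p : ℕ → ℕ) : Prop :=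
  p r = lam r ∧
  (∀ k : ℕ, t ≤ k → k < r →
    1 ≤ p k ∧ p k ≤ lam k ∧ T k (p k) < T (k + 1) (p (k + 1)) ∧
    ∀ c : ℕ, p k < c → c ≤ lam k → T (k + 1) (p (k + 1)) ≤ T k c) ∧
  T t (p t) = 0 ∧ (∀ k : ℕ, t < k → k ≤ r → 0 < T k (p k))

/-- The tableau obtained by performing the deletion along the path `p`. -/
def DeleteResult (T : ℕ → ℕ → ℕ) (r t : ℕ) (p : ℕ → ℕ) : ℕ → ℕ → ℕ :=
  fun k c => if t ≤ k ∧ k < r ∧ c = p k then T (k + 1) (p (k + 1)) else T k c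

/-- The sequence `f - ε_m`: decrease the value of `f` at `m` by one. -/
def decAt (f : ℕ → ℕ) (m : ℕ) : ℕ → ℕ := fun k => if k = m then f m - 1 else f k

namespace CornerDelAux

lemma partFun_antitone {f : ℕ → ℕ} (hf : IsPartitionFun f) :
    ∀ a b : ℕ, 1 ≤ a → a ≤ b → f b ≤ f a := by
  intro a b ha hab
  induction b with
  | zero => omega
  | succ b ih =>
    by_cases hq : a = b + 1
    · subst hq; exact le_rfl
    · exact le_trans (hf b (by omega)) (ih (by omega))

lemma rowWeak_chain {lam : ℕ → ℕ} {T : ℕ → ℕ → ℕ} (h : RowWeak lam T)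
    {r : ℕ} (hr : 1 ≤ r) :
    ∀ c' c : ℕ, 1 ≤ c → c ≤ c' → c' ≤ lam r → T r c ≤ T r c' := by
  intro c'
  induction c' with
  | zero => intro c hc hcc _; omega
  | succ d ih =>
    intro c hc hcc hdl
    by_cases hq : c = d + 1
    · subst hq; exact le_rfl
    · exact le_trans (ih c hc (by omega) (by omega)) (h r d hr (by omega) (by omega))

lemma card_filter_insert_decomp {A : Finset ℕ} {a : ℕ} (ha : a ∉ A) (f : ℕ → ℕ) (s : ℕ) :
    ((insert a A).filter (fun c => f c = s)).card
      = (A.filter (fun c => f c = s)).card + (if f a = s then 1 else 0) := by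
  rw [Finset.filter_insert]
  split
  · rw [Finset.card_insert_of_notMem (fun hmem => ha (Finset.mem_of_mem_filter a hmem))]
  · simp

lemma Ioc_eq_insert {m l : ℕ} (h : m < l) :
    Finset.Ioc m l = insert l (Finset.Ioc m (l - 1)) := by
  ext x; simp only [Finset.mem_Ioc, Finset.mem_insert]; omega

lemma Ioc_pred_eq_insert {m l : ℕ} (h1 : 1 ≤ m) (h2 : m ≤ l) :
    Finset.Ioc (m - 1) l = insert m (Finset.Ioc m l) := by
  ext x; simp only [Finset.mem_Ioc, Finset.mem_insert]; omega

lemma max_unbot'_mem {s : Finset ℕ} (h : s.Nonempty) : WithBot.unbotD 0 s.max ∈ s := by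
  rcases Finset.max_of_nonempty h with ⟨a, ha⟩
  rw [ha, WithBot.unbotD_coe]; exact Finset.mem_of_max ha

lemma le_max_unbot' {s : Finset ℕ} {a : ℕ} (h : a ∈ s) : a ≤ WithBot.unbotD 0 s.max := by
  rcases Finset.max_of_nonempty ⟨a, h⟩ with ⟨b, hb⟩
  rw [hb, WithBot.unbotD_coe]
  exact_mod_cast hb ▸ Finset.le_max h

/-- The column of the deletion path in row `n - j` (going up from the corner). -/
def pathAux (lam : ℕ → ℕ) (T : ℕ → ℕ → ℕ) (n : ℕ) : ℕ → ℕ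
  | 0 => lam n
  | j + 1 =>
      WithBot.unbotD 0 (((Finset.Icc 1 (lam (n - (j + 1)))).filter
        (fun c => T (n - (j + 1)) c < T (n - j) (pathAux lam T n j))).max)

lemma decAt_le (f : ℕ → ℕ) (m r : ℕ) : decAt f m r ≤ f r := by
  by_cases h : r = m
  · subst h; simp [decAt]
  · simp [decAt, h]

lemma decAt_eq (f : ℕ → ℕ) (m r : ℕ) (h : r ≠ m) : decAt f m r = f r := by
  simp [decAt, h]

lemma decAt_self (f : ℕ → ℕ) (m : ℕ) : decAt f m m = f m - 1 := by
  simp [decAt]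

end CornerDelAux

open CornerDelAux

/-- Let `lam` have exactly `n` parts and let `T` be a Littlewood–Richardson tableau of
shape `lam/mu` and weight `nu`.  Then the deletion operator `δ_{n, lam n}` starting at
the corner `(n, lam n)` maps `T` to an LR tableau `T'` with:
(i) if `ν_n > 0` then the corner contains `n` and is simply removed, giving
`T' ∈ LR((lam - ε_n)/mu, nu - ε_n)`;
(ii) if `ν_n = 0` and `lam n > mu n` then `0 < T n (lam n) < n` and the type (ii)
deletion with terminating row `t` (some `1 ≤ t < n`) gives
`T' ∈ LR((lam - ε_n)/(mu - ε_t), nu)`;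
(iii) if `ν_n = 0` and `lam n = mu n` then removing the empty corner from both shapes
gives `T' ∈ LR((lam - ε_n)/(mu - ε_n), nu)`. -/
theorem corner_deletion_cases (n : ℕ) (lam mu nu : ℕ → ℕ) (T : ℕ → ℕ → ℕ)
    (hn : 1 ≤ n)
    (hlam : IsPartitionFun lam) (hmu : IsPartitionFun mu)
    (hsub : ∀ k : ℕ, 1 ≤ k → mu k ≤ lam k)
    (hzero : ZeroIffInner lam mu T)
    (hrow : RowWeak lam T) (hcol : ColStrict lam mu T)
    (hlat : LatticeProp lam mu T)
    (hwt : ∀ s : ℕ, 1 ≤ s → nu s = ∑ r ∈ Finset.Icc 1 n, RowCount lam mu T s r)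
    (hlen : 1 ≤ lam n) (hlen' : lam (n + 1) = 0) :
    (0 < nu n →
      T n (lam n) = n ∧
      ZeroIffInner (decAt lam n) mu T ∧
      RowWeak (decAt lam n) T ∧
      ColStrict (decAt lam n) mu T ∧
      LatticeProp (decAt lam n) mu T ∧
      (∀ s : ℕ, 1 ≤ s →
        (if s = n then nu n - 1 else nu s) =
          ∑ r ∈ Finset.Icc 1 n, RowCount (decAt lam n) mu T s r)) ∧
    (nu n = 0 → mu n < lam n →
      0 < T n (lam n) ∧ T n (lam n) < n ∧
      ∃ t p, 1 ≤ t ∧ t < n ∧ DeletionPath lam T n t p ∧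
        ZeroIffInner (decAt lam n) (decAt mu t) (DeleteResult T n t p) ∧
        RowWeak (decAt lam n) (DeleteResult T n t p) ∧
        ColStrict (decAt lam n) (decAt mu t) (DeleteResult T n t p) ∧
        LatticeProp (decAt lam n) (decAt mu t) (DeleteResult T n t p) ∧
        (∀ s : ℕ, 1 ≤ s →
          nu s =
            ∑ r ∈ Finset.Icc 1 n,
              RowCount (decAt lam n) (decAt mu t) (DeleteResult T n t p) s r)) ∧
    (nu n = 0 → lam n = mu n →
      ZeroIffInner (decAt lam n) (decAt mu n) T ∧
      RowWeak (decAt lam n) T ∧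
      ColStrict (decAt lam n) (decAt mu n) T ∧
      LatticeProp (decAt lam n) (decAt mu n) T ∧
      (∀ s : ℕ, 1 ≤ s →
        nu s = ∑ r ∈ Finset.Icc 1 n, RowCount (decAt lam n) (decAt mu n) T s r)) := by
  classical
  -- Global facts
  have lamz : ∀ r, n < r → lam r = 0 := by
    intro r hr
    have := partFun_antitone hlam (n + 1) r (by omega) (by omega)
    omega
  have rcz : ∀ s r, n < r → RowCount lam mu T s r = 0 := by
    intro s r hr
    unfold RowCount
    rw [lamz r hr, Finset.Ioc_eq_empty (by omega)]
    simp
  have hposT : ∀ r c, 1 ≤ r → mu r < c → c ≤ lam r → 0 < T r c := by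
    intro r c hr hm hc
    rcases Nat.eq_zero_or_pos (T r c) with h0 | h0
    · have := (hzero r c hr (by omega) hc).mp h0; omega
    · exact h0
  have hLlt : ∀ r s, r < s → ∑ r' ∈ Finset.Icc 1 r, RowCount lam mu T s r' = 0 := by
    intro r
    induction r with
    | zero => intro s _; simp
    | succ r ih =>
      intro s hs
      have h1 := hlat (r + 1) s (by omega) (by omega)
      have h2 := ih (s - 1) (by omega)
      rw [Finset.sum_Icc_succ_top (by omega)] at h1 ⊢
      rw [show r + 1 - 1 = r from rfl] at h1
      omega
  have hTle : ∀ r c, 1 ≤ r → mu r < c → c ≤ lam r → T r c ≤ r := by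
    intro r c hr hm hc
    by_contra hgt
    push_neg at hgt
    have h1 : 0 < RowCount lam mu T (T r c) r := by
      unfold RowCount
      exact Finset.card_pos.mpr ⟨c, Finset.mem_filter.mpr ⟨Finset.mem_Ioc.mpr ⟨hm, hc⟩, rfl⟩⟩
    have h2 : RowCount lam mu T (T r c) r ≤ ∑ r' ∈ Finset.Icc 1 r, RowCount lam mu T (T r c) r' :=
      Finset.single_le_sum (fun i _ => Nat.zero_le _) (Finset.mem_Icc.mpr ⟨hr, le_rfl⟩)
    have h3 := hLlt r (T r c) hgt
    omega
  have hLstab : ∀ s r, n ≤ r →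
      ∑ r' ∈ Finset.Icc 1 r, RowCount lam mu T s r' =
        ∑ r' ∈ Finset.Icc 1 n, RowCount lam mu T s r' := by
    intro s r
    induction r with
    | zero => intro h; exact absurd h (by omega)
    | succ r ih =>
      intro h
      rcases Nat.eq_or_lt_of_le h with h1 | h1
      · rw [h1]
      · rw [Finset.sum_Icc_succ_top (by omega), rcz s (r + 1) (by omega), Nat.add_zero]
        exact ih (by omega)
  refine ⟨?_, ?_, ?_⟩
  · -- Case (i)
    intro hnu
    have hLn : 0 < ∑ r' ∈ Finset.Icc 1 n, RowCount lam mu T n r' := by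
      rw [← hwt n hn]; exact hnu
    obtain ⟨r0, hr0mem, hr0pos⟩ : ∃ r0 ∈ Finset.Icc 1 n, 0 < RowCount lam mu T n r0 := by
      by_contra hcon
      push_neg at hcon
      have : ∑ r' ∈ Finset.Icc 1 n, RowCount lam mu T n r' = 0 :=
        Finset.sum_eq_zero (fun i hi => by have := hcon i hi; omega)
      omega
    rw [Finset.mem_Icc] at hr0mem
    obtain ⟨c0, hc0⟩ : ∃ c0, c0 ∈ (Finset.Ioc (mu r0) (lam r0)).filter (fun c => T r0 c = n) := by
      unfold RowCount at hr0pos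
      exact Finset.card_pos.mp hr0pos
    simp only [Finset.mem_filter, Finset.mem_Ioc] at hc0
    obtain ⟨⟨hc01, hc02⟩, hc03⟩ := hc0
    have hr0n : r0 = n := by
      have := hTle r0 c0 hr0mem.1 hc01 hc02; omega
    rcases eq_comm.mp hr0n with rfl
    have hmun : mu n < lam n := lt_of_lt_of_le hc01 hc02
    have hcorner : T n (lam n) = n := by
      have h1 : T n c0 ≤ T n (lam n) :=
        rowWeak_chain hrow hn (lam n) c0 (by omega) hc02 le_rfl
      have h2 := hTle n (lam n) hn hmun le_rfl
      omega
    have hrc : ∀ s k, RowCount lam mu T s k =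
        RowCount (decAt lam n) mu T s k + (if k = n ∧ s = n then 1 else 0) := by
      intro s k
      by_cases hk : k = n
      · rcases eq_comm.mp hk with rfl
        unfold RowCount
        rw [decAt_self lam n, Ioc_eq_insert hmun,
          card_filter_insert_decomp (by simp only [Finset.mem_Ioc]; omega) (T n) s, hcorner]
        split_ifs <;> omega
      · unfold RowCount
        rw [decAt_eq lam n k hk]
        simp [hk]
    have hLrel : ∀ s r, ∑ r' ∈ Finset.Icc 1 r, RowCount lam mu T s r'
        = ∑ r' ∈ Finset.Icc 1 r, RowCount (decAt lam n) mu T s r'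
          + (if s = n ∧ n ≤ r then 1 else 0) := by
      intro s r
      induction r with
      | zero =>
        rw [if_neg (by omega : ¬(s = n ∧ n ≤ 0))]
        simp
      | succ r ih =>
        rw [Finset.sum_Icc_succ_top (by omega), Finset.sum_Icc_succ_top (by omega),
          hrc s (r + 1), ih]
        split_ifs <;> omega
    refine ⟨hcorner, ?_, ?_, ?_, ?_, ?_⟩
    · intro r c hr hc hcl
      exact hzero r c hr hc (le_trans hcl (decAt_le lam n r))
    · intro r c hr hc hcl
      exact hrow r c hr hc (lt_of_lt_of_le hcl (decAt_le lam n r))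
    · intro r c hr hmc hcl
      exact hcol r c hr hmc (le_trans hcl (decAt_le lam n (r + 1)))
    · intro r s hr hs
      have h1 := hLrel s r
      have h2 := hLrel (s - 1) (r - 1)
      have h3 := hlat r s hr hs
      by_cases hc1 : s = n + 1 ∧ n ≤ r - 1
      · have h4 : ∑ r' ∈ Finset.Icc 1 r, RowCount lam mu T s r' = 0 := by
          rcases le_or_gt r n with h | h
          · exact hLlt r s (by omega)
          · rw [hLstab s r (by omega)]; exact hLlt n s (by omega)
        split_ifs at h1 h2 <;> omega
      · split_ifs at h1 h2 <;> omega
    · intro s hs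
      have h1 := hLrel s n
      have h2 := hwt s hs
      by_cases hsn : s = n
      · subst hsn
        rw [if_pos rfl]
        rw [if_pos (by exact ⟨rfl, le_rfl⟩)] at h1
        omega
      · rw [if_neg hsn]
        rw [if_neg (by omega)] at h1
        omega
  · -- Case (ii)
    intro hnu0 hmln
    have hT0 : 0 < T n (lam n) := hposT n (lam n) hn hmln le_rfl
    have hTn : T n (lam n) < n := by
      have h1 := hTle n (lam n) hn hmln le_rfl
      rcases Nat.eq_or_lt_of_le h1 with he | hlt
      · exfalso
        have hpos' : 0 < RowCount lam mu T n n := by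
          unfold RowCount
          exact Finset.card_pos.mpr
            ⟨lam n, Finset.mem_filter.mpr ⟨Finset.mem_Ioc.mpr ⟨hmln, le_rfl⟩, he⟩⟩
        have h2 : RowCount lam mu T n n ≤ ∑ r' ∈ Finset.Icc 1 n, RowCount lam mu T n r' :=
          Finset.single_le_sum (fun i _ => Nat.zero_le _) (Finset.mem_Icc.mpr ⟨hn, le_rfl⟩)
        have h3 := hwt n hn
        omega
      · exact hlt
    obtain ⟨q, hq⟩ : ∃ q : ℕ → ℕ, q = pathAux lam T n := ⟨_, rfl⟩
    have hq0 : q 0 = lam n := by rw [hq]; rfl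
    have hstep : ∀ j : ℕ, j + 2 ≤ n →
        1 ≤ q j → q j ≤ lam (n - j) → 0 < T (n - j) (q j) →
        (q j ≤ q (j + 1) ∧ 1 ≤ q (j + 1) ∧ q (j + 1) ≤ lam (n - (j + 1)) ∧
         T (n - (j + 1)) (q (j + 1)) < T (n - j) (q j) ∧
         ∀ c, q (j + 1) < c → c ≤ lam (n - (j + 1)) → T (n - j) (q j) ≤ T (n - (j + 1)) c) := by
      intro j hj h1 h2 h3
      have hrow1 : 1 ≤ n - (j + 1) := by omega
      have hlm : lam (n - j) ≤ lam (n - (j + 1)) := by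
        have h := hlam (n - (j + 1)) hrow1
        rw [show n - (j + 1) + 1 = n - j by omega] at h
        exact h
      have hmem : q j ∈ (Finset.Icc 1 (lam (n - (j + 1)))).filter
          (fun c => T (n - (j + 1)) c < T (n - j) (q j)) := by
        refine Finset.mem_filter.mpr ⟨Finset.mem_Icc.mpr ⟨h1, le_trans h2 hlm⟩, ?_⟩
        by_cases hcm : q j ≤ mu (n - (j + 1))
        · have h0 := (hzero (n - (j + 1)) (q j) hrow1 h1 (le_trans h2 hlm)).mpr hcm
          omega
        · have hcs := hcol (n - (j + 1)) (q j) hrow1 (by omega)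
            (by rw [show n - (j + 1) + 1 = n - j by omega]; exact h2)
          rw [show n - (j + 1) + 1 = n - j by omega] at hcs
          exact hcs
      have hdef : q (j + 1) = WithBot.unbotD 0 (((Finset.Icc 1 (lam (n - (j + 1)))).filter
          (fun c => T (n - (j + 1)) c < T (n - j) (q j))).max) := by
        rw [hq]; rfl
      have hmax_mem := max_unbot'_mem ⟨q j, hmem⟩
      rw [← hdef] at hmax_mem
      have hmax_ge : q j ≤ q (j + 1) := by rw [hdef]; exact le_max_unbot' hmem
      have hmm := Finset.mem_filter.mp hmax_mem
      have hmm1 := Finset.mem_Icc.mp hmm.1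
      refine ⟨hmax_ge, hmm1.1, hmm1.2, hmm.2, ?_⟩
      intro c hc hcl
      by_contra hlt2
      push_neg at hlt2
      have hcmem : c ∈ (Finset.Icc 1 (lam (n - (j + 1)))).filter
          (fun c => T (n - (j + 1)) c < T (n - j) (q j)) :=
        Finset.mem_filter.mpr ⟨Finset.mem_Icc.mpr ⟨by omega, hcl⟩, hlt2⟩
      have := le_max_unbot' hcmem
      rw [← hdef] at this
      omega
    have hchain : ∀ j : ℕ, j ≤ n - 1 → (∀ i : ℕ, i < j → 0 < T (n - i) (q i)) →
        (1 ≤ q j ∧ q j ≤ lam (n - j) ∧ T (n - j) (q j) + j + 1 ≤ n) := by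
      intro j
      induction j with
      | zero =>
        intro _ _
        rw [Nat.sub_zero, hq0]
        exact ⟨hlen, le_rfl, by omega⟩
      | succ j ih =>
        intro hj hpos
        obtain ⟨a1, a2, a3⟩ := ih (by omega) (fun i hi => hpos i (by omega))
        have h3 : 0 < T (n - j) (q j) := hpos j (by omega)
        obtain ⟨b1, b2, b3, b4, b5⟩ := hstep j (by omega) a1 a2 h3
        exact ⟨b2, b3, by omega⟩
    have hex : ∃ j : ℕ, T (n - j) (q j) = 0 := by
      by_contra hcon
      push_neg at hcon
      have h := hchain (n - 1) le_rfl (fun i _ => Nat.pos_of_ne_zero (hcon i))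
      have h0 := hcon (n - 1)
      omega
    obtain ⟨j0, hj0, hj0min⟩ : ∃ j0, T (n - j0) (q j0) = 0 ∧
        ∀ i, i < j0 → 0 < T (n - i) (q i) :=
      ⟨Nat.find hex, Nat.find_spec hex,
        fun i hi => Nat.pos_of_ne_zero (Nat.find_min hex hi)⟩
    have hj0pos : 1 ≤ j0 := by
      rcases Nat.eq_zero_or_pos j0 with h | h
      · rw [h, Nat.sub_zero, hq0] at hj0; omega
      · exact h
    have hj0le : j0 ≤ n - 1 := by
      by_contra hcon
      push_neg at hcon
      have h := hchain (n - 1) le_rfl (fun i hi => hj0min i (by omega))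
      have h0 := hj0min (n - 1) (by omega)
      omega
    have hQ : ∀ j, j ≤ j0 → 1 ≤ q j ∧ q j ≤ lam (n - j) := by
      intro j hj
      obtain ⟨a1, a2, _⟩ := hchain j (by omega) (fun i hi => hj0min i (by omega))
      exact ⟨a1, a2⟩
    have hstep' : ∀ j, j < j0 →
        (q j ≤ q (j + 1) ∧ 1 ≤ q (j + 1) ∧ q (j + 1) ≤ lam (n - (j + 1)) ∧
         T (n - (j + 1)) (q (j + 1)) < T (n - j) (q j) ∧
         ∀ c, q (j + 1) < c → c ≤ lam (n - (j + 1)) → T (n - j) (q j) ≤ T (n - (j + 1)) c) := by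
      intro j hj
      obtain ⟨a1, a2⟩ := hQ j (by omega)
      exact hstep j (by omega) a1 a2 (hj0min j hj)
    have hpge : ∀ j, j ≤ j0 → lam n ≤ q j := by
      intro j
      induction j with
      | zero => intro _; exact hq0.ge
      | succ j ih => intro hj; exact le_trans (ih (by omega)) (hstep' j (by omega)).1
    obtain ⟨t, htdef⟩ : ∃ t, t = n - j0 := ⟨_, rfl⟩
    obtain ⟨p, hpdef⟩ : ∃ p : ℕ → ℕ, p = fun k => q (n - k) := ⟨_, rfl⟩
    have ht1 : 1 ≤ t := by omega
    have ht2 : t < n := by omega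
    have hp12 : ∀ k, t ≤ k → k ≤ n → 1 ≤ p k ∧ p k ≤ lam k := by
      intro k hk1 hk2
      have h := hQ (n - k) (by omega)
      rw [show n - (n - k) = k by omega] at h
      simp only [hpdef]
      exact h
    have hpn : p n = lam n := by
      simp only [hpdef]
      rw [Nat.sub_self, hq0]
    have hpt0 : T t (p t) = 0 := by
      simp only [hpdef]
      rw [show n - t = j0 by omega, htdef]
      exact hj0
    have hP4 : ∀ k, t < k → k ≤ n → 0 < T k (p k) := by
      intro k hk1 hk2
      have h := hj0min (n - k) (by omega)
      rw [show n - (n - k) = k by omega] at h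
      simp only [hpdef]
      exact h
    have hval : ∀ k, t ≤ k → k < n → T k (p k) < T (k + 1) (p (k + 1)) := by
      intro k hk1 hk2
      have h := (hstep' (n - k - 1) (by omega)).2.2.2.1
      rw [show n - k - 1 + 1 = n - k by omega, show n - (n - k) = k by omega,
        show n - (n - k - 1) = k + 1 by omega] at h
      simp only [hpdef]
      rw [show n - (k + 1) = n - k - 1 by omega]
      exact h
    have hmaxi : ∀ k, t ≤ k → k < n →
        ∀ c, p k < c → c ≤ lam k → T (k + 1) (p (k + 1)) ≤ T k c := by
      intro k hk1 hk2 c hc1 hc2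
      have h := (hstep' (n - k - 1) (by omega)).2.2.2.2 c
      rw [show n - k - 1 + 1 = n - k by omega, show n - (n - k) = k by omega,
        show n - (n - k - 1) = k + 1 by omega] at h
      simp only [hpdef] at hc1 ⊢
      rw [show n - (k + 1) = n - k - 1 by omega]
      exact h hc1 hc2
    have hmono : ∀ k, t ≤ k → k < n → p (k + 1) ≤ p k := by
      intro k hk1 hk2
      have h := (hstep' (n - k - 1) (by omega)).1
      rw [show n - k - 1 + 1 = n - k by omega] at h
      simp only [hpdef]
      rw [show n - (k + 1) = n - k - 1 by omega]
      exact h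
    have hpgelam : ∀ k, t ≤ k → k ≤ n → lam n ≤ p k := by
      intro k hk1 hk2
      have h := hpge (n - k) (by omega)
      simp only [hpdef]
      exact h
    have hpmu : ∀ k, t < k → k ≤ n → mu k < p k := by
      intro k hk1 hk2
      by_contra hcon
      push_neg at hcon
      have h12 := hp12 k (by omega) hk2
      have h0 := (hzero k (p k) (by omega) h12.1 h12.2).mpr hcon
      have h1 := hP4 k hk1 hk2
      omega
    have hptle : p t ≤ mu t := by
      have h1 := hp12 t le_rfl (by omega)
      exact (hzero t (p t) ht1 h1.1 h1.2).mp hpt0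
    have hmut1 : 1 ≤ mu t := le_trans (hp12 t le_rfl (by omega)).1 hptle
    have hpt : p t = mu t := by
      rcases Nat.eq_or_lt_of_le hptle with h | h
      · exact h
      · exfalso
        obtain ⟨j1, hj1⟩ : ∃ j1, j0 = j1 + 1 := ⟨j0 - 1, by omega⟩
        have hb5 := (hstep' j1 (by omega)).2.2.2.2
        have hbpos := hj0min j1 (by omega)
        have hpq : p t = q (j1 + 1) := by
          simp only [hpdef]
          rw [show n - t = j1 + 1 by omega]
        have h2 := hb5 (mu t) (by rw [← hpq]; exact h)
          (by rw [show n - (j1 + 1) = t by omega]; exact hsub t ht1)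
        have h3 : T (n - (j1 + 1)) (mu t) = 0 := by
          rw [show n - (j1 + 1) = t by omega]
          exact (hzero t (mu t) ht1 hmut1 (hsub t ht1)).mpr le_rfl
        omega
    have hT'off : ∀ k c, ¬(t ≤ k ∧ k < n ∧ c = p k) → DeleteResult T n t p k c = T k c := by
      intro k c h
      simp only [DeleteResult, if_neg h]
    have hT'on : ∀ k, t ≤ k → k < n →
        DeleteResult T n t p k (p k) = T (k + 1) (p (k + 1)) := by
      intro k h1 h2
      simp [DeleteResult, h1, h2]
    have hpath : DeletionPath lam T n t p :=
      ⟨hpn, fun k hk1 hk2 => ⟨(hp12 k hk1 (by omega)).1, (hp12 k hk1 (by omega)).2,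
        hval k hk1 hk2, hmaxi k hk1 hk2⟩, hpt0, fun k hk1 hk2 => hP4 k hk1 hk2⟩
    -- Zero iff inner
    have hZ : ZeroIffInner (decAt lam n) (decAt mu t) (DeleteResult T n t p) := by
      intro r c hr hc hcl
      by_cases hon : t ≤ r ∧ r < n ∧ c = p r
      · obtain ⟨a1, a2, a3⟩ := hon
        have hv : DeleteResult T n t p r c = T (r + 1) (p (r + 1)) := by
          rw [a3]; exact hT'on r a1 a2
        have hvpos : 0 < T (r + 1) (p (r + 1)) := hP4 (r + 1) (by omega) (by omega)
        have hmu' : decAt mu t r < c := by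
          by_cases hrt : r = t
          · rcases eq_comm.mp hrt with rfl
            rw [decAt_self mu t, a3, hpt]
            omega
          · rw [decAt_eq mu t r hrt]
            have := hpmu r (by omega) (by omega)
            omega
        rw [hv]
        constructor
        · intro h0; omega
        · intro hle; omega
      · rw [hT'off r c hon]
        by_cases hrt : r = t
        · rcases eq_comm.mp hrt with rfl
          rw [decAt_eq lam n t (by omega)] at hcl
          rw [decAt_self mu t]
          have hcmt : c ≠ mu t := by
            intro he
            exact hon ⟨le_rfl, ht2, by rw [he, hpt]⟩
          have hiff := hzero t c hr hc hcl
          constructor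
          · intro h0; have := hiff.mp h0; omega
          · intro hle; exact hiff.mpr (by omega)
        · rw [decAt_eq mu t r hrt]
          exact hzero r c hr hc (le_trans hcl (decAt_le lam n r))
    -- Row weak
    have hR : RowWeak (decAt lam n) (DeleteResult T n t p) := by
      intro r c hr hc hcl
      have hcl2 : c + 1 ≤ lam r := by
        have := decAt_le lam n r; omega
      by_cases h1 : t ≤ r ∧ r < n ∧ c = p r
      · obtain ⟨a1, a2, a3⟩ := h1
        subst a3
        rw [hT'on r a1 a2, hT'off r (p r + 1) (by rintro ⟨_, _, h⟩; omega)]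
        exact hmaxi r a1 a2 (p r + 1) (by omega) hcl2
      · by_cases h2 : t ≤ r ∧ r < n ∧ c + 1 = p r
        · obtain ⟨a1, a2, a3⟩ := h2
          rw [hT'off r c h1, a3, hT'on r a1 a2]
          have e1 : T r c ≤ T r (p r) := by
            rw [← a3]
            exact hrow r c hr hc (by omega)
          have e2 := hval r a1 a2
          omega
        · rw [hT'off r c h1, hT'off r (c + 1) h2]
          exact hrow r c hr hc (by omega)
    -- Column strict
    have hC : ColStrict (decAt lam n) (decAt mu t) (DeleteResult T n t p) := by
      intro r c hr hmc hcl
      have hcll : c ≤ lam (r + 1) := le_trans hcl (decAt_le lam n (r + 1))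
      by_cases hA1 : t ≤ r ∧ r < n ∧ c = p r
      · obtain ⟨a1, a2, a3⟩ := hA1
        by_cases hA2 : t ≤ r + 1 ∧ r + 1 < n ∧ c = p (r + 1)
        · obtain ⟨b1, b2, b3⟩ := hA2
          have hv1 : DeleteResult T n t p r c = T (r + 1) (p (r + 1)) := by
            rw [a3]; exact hT'on r a1 a2
          have hv2 : DeleteResult T n t p (r + 1) c = T (r + 1 + 1) (p (r + 1 + 1)) := by
            rw [b3]; exact hT'on (r + 1) b1 b2
          rw [hv1, hv2]
          exact hval (r + 1) b1 b2
        · by_cases hrn : r + 1 = n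
          · exfalso
            have hge := hpgelam r a1 (by omega)
            rw [hrn, decAt_self lam n] at hcl
            omega
          · have b1 : t ≤ r + 1 := by omega
            have b2 : r + 1 < n := by omega
            have hne : c ≠ p (r + 1) := fun h => hA2 ⟨b1, b2, h⟩
            have hmono' := hmono r a1 a2
            have hv1 : DeleteResult T n t p r c = T (r + 1) (p (r + 1)) := by
              rw [a3]; exact hT'on r a1 a2
            have hv2 : DeleteResult T n t p (r + 1) c = T (r + 1) c :=
              hT'off (r + 1) c (by rintro ⟨_, _, h⟩; exact hne h)
            rw [hv1, hv2]
            have hmax := hmaxi (r + 1) b1 b2 c (by omega)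
              (by rw [decAt_eq lam n (r + 1) hrn] at hcl; exact hcl)
            have := hval (r + 1) b1 b2
            omega
      · by_cases hA2 : t ≤ r + 1 ∧ r + 1 < n ∧ c = p (r + 1)
        · obtain ⟨b1, b2, b3⟩ := hA2
          by_cases hrt : r < t
          · exfalso
            have hrt1 : r + 1 = t := by omega
            have hcmu : c = mu t := by rw [b3, hrt1, hpt]
            have hmr : mu t ≤ mu r := partFun_antitone hmu r t hr (by omega)
            rw [decAt_eq mu t r (by omega)] at hmc
            omega
          · have a1 : t ≤ r := by omega
            have hne : c ≠ p r := fun h => hA1 ⟨a1, by omega, h⟩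
            have hmono' := hmono r a1 (by omega)
            have hv1 : DeleteResult T n t p r c = T r c :=
              hT'off r c (by rintro ⟨_, _, h⟩; exact hne h)
            have hv2 : DeleteResult T n t p (r + 1) c = T (r + 1 + 1) (p (r + 1 + 1)) := by
              rw [b3]; exact hT'on (r + 1) b1 b2
            rw [hv1, hv2]
            have e1 : T r c ≤ T r (p r) := by
              refine rowWeak_chain hrow hr (p r) c (by omega) (by omega)
                (hp12 r a1 (by omega)).2
            have e2 := hval r a1 (by omega)
            have e3 := hval (r + 1) b1 b2
            omega
        · rw [hT'off r c hA1, hT'off (r + 1) c hA2]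
          refine hcol r c hr ?_ hcll
          by_cases hrt : r = t
          · rcases eq_comm.mp hrt with rfl
            rw [decAt_self mu t] at hmc
            have hne : c ≠ p t := fun h => hA1 ⟨le_rfl, ht2, h⟩
            rw [hpt] at hne
            omega
          · rw [decAt_eq mu t r hrt] at hmc
            exact hmc
    -- Row count relation
    have hrowrel : ∀ s k, 1 ≤ k →
        RowCount (decAt lam n) (decAt mu t) (DeleteResult T n t p) s k
          + (if t < k ∧ k ≤ n ∧ T k (p k) = s then 1 else 0)
        = RowCount lam mu T s k
          + (if t ≤ k ∧ k < n ∧ T (k + 1) (p (k + 1)) = s then 1 else 0) := by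
      intro s k hk
      by_cases hlt : k < t
      · unfold RowCount
        rw [decAt_eq lam n k (by omega), decAt_eq mu t k (by omega),
          Finset.filter_congr (fun c _ => by rw [hT'off k c (by omega)])]
        rw [if_neg (by omega), if_neg (by omega)]
      · by_cases heq : k = t
        · rcases eq_comm.mp heq with rfl
          unfold RowCount
          rw [decAt_eq lam n t (by omega), decAt_self mu t,
            Ioc_pred_eq_insert hmut1 (hsub t ht1),
            card_filter_insert_decomp (by simp only [Finset.mem_Ioc]; omega)
              (DeleteResult T n t p t) s]
          rw [Finset.filter_congr (fun c hcmem => by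
            rw [hT'off t c (by
              simp only [Finset.mem_Ioc] at hcmem
              rintro ⟨_, _, hcc⟩
              rw [hpt] at hcc
              omega)])]
          have hv : DeleteResult T n t p t (mu t) = T (t + 1) (p (t + 1)) := by
            rw [← hpt]
            exact hT'on t le_rfl ht2
          rw [hv]
          split_ifs <;> omega
        · by_cases hkn : k < n
          · have pmem : p k ∈ Finset.Ioc (mu k) (lam k) :=
              Finset.mem_Ioc.mpr ⟨hpmu k (by omega) (by omega), (hp12 k (by omega) (by omega)).2⟩
            unfold RowCount
            rw [decAt_eq lam n k (by omega), decAt_eq mu t k (by omega)]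
            rw [← Finset.insert_erase pmem]
            rw [card_filter_insert_decomp (Finset.notMem_erase _ _) (DeleteResult T n t p k) s,
              card_filter_insert_decomp (Finset.notMem_erase _ _) (T k) s]
            rw [Finset.filter_congr (fun c hcmem => by
              rw [hT'off k c (by
                rintro ⟨_, _, hcc⟩
                exact (Finset.ne_of_mem_erase hcmem) hcc)])]
            rw [hT'on k (by omega) hkn]
            split_ifs <;> omega
          · by_cases hkn2 : k = n
            · rcases eq_comm.mp hkn2 with rfl
              unfold RowCount
              rw [decAt_self lam n, decAt_eq mu t n (by omega)]
              rw [Ioc_eq_insert hmln,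
                card_filter_insert_decomp (by simp only [Finset.mem_Ioc]; omega) (T n) s]
              rw [Finset.filter_congr (fun c _ => by rw [hT'off n c (by omega)])]
              rw [hpn]
              split_ifs <;> omega
            · have hz1 : lam k = 0 := lamz k (by omega)
              unfold RowCount
              rw [decAt_eq lam n k hkn2, decAt_eq mu t k (by omega), hz1,
                Finset.Ioc_eq_empty (by omega)]
              simp only [Finset.filter_empty, Finset.card_empty]
              rw [if_neg (by omega), if_neg (by omega)]
    -- prefix sum relation
    have hLrel2 : ∀ s r, ∑ r' ∈ Finset.Icc 1 r,
          RowCount (decAt lam n) (decAt mu t) (DeleteResult T n t p) s r'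
        = ∑ r' ∈ Finset.Icc 1 r, RowCount lam mu T s r'
          + (if t ≤ r ∧ r < n ∧ T (r + 1) (p (r + 1)) = s then 1 else 0) := by
      intro s r
      induction r with
      | zero => rw [if_neg (by omega)]; simp
      | succ r ih =>
        rw [Finset.sum_Icc_succ_top (by omega), Finset.sum_Icc_succ_top (by omega), ih]
        have h := hrowrel s (r + 1) (by omega)
        split_ifs at h ⊢ <;> omega
    -- lattice property
    have hL : LatticeProp (decAt lam n) (decAt mu t) (DeleteResult T n t p) := by
      intro r s hr hs
      have h1 := hLrel2 s r
      have h2 := hLrel2 (s - 1) (r - 1)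
      have h3 := hlat r s hr hs
      by_cases hind : t ≤ r ∧ r < n ∧ T (r + 1) (p (r + 1)) = s
      · obtain ⟨d1, d2, d3⟩ := hind
        rw [if_pos ⟨d1, d2, d3⟩] at h1
        by_cases hur : T r (p r) = s - 1
        · have hrt : t < r := by
            rcases Nat.eq_or_lt_of_le d1 with he | hlt2
            · exfalso
              rw [← he] at hur
              have := hpt0
              omega
            · exact hlt2
          have h4 : (if t ≤ r - 1 ∧ r - 1 < n ∧ T (r - 1 + 1) (p (r - 1 + 1)) = s - 1
              then 1 else 0) = 1 := by
            rw [if_pos]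
            exact ⟨by omega, by omega, by rw [show r - 1 + 1 = r by omega]; exact hur⟩
          rw [h4] at h2
          omega
        · have hcell : 0 < RowCount lam mu T s (r + 1) := by
            unfold RowCount
            refine Finset.card_pos.mpr ⟨p (r + 1),
              Finset.mem_filter.mpr ⟨Finset.mem_Ioc.mpr ⟨?_, ?_⟩, d3⟩⟩
            · exact hpmu (r + 1) (by omega) (by omega)
            · exact (hp12 (r + 1) (by omega) (by omega)).2
          have h5 := hlat (r + 1) s (by omega) hs
          rw [Finset.sum_Icc_succ_top (by omega), show r + 1 - 1 = r from rfl] at h5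
          have h6 : RowCount lam mu T (s - 1) r = 0 := by
            unfold RowCount
            rw [Finset.card_eq_zero, Finset.filter_eq_empty_iff]
            intro c hcmem
            rw [Finset.mem_Ioc] at hcmem
            by_cases hcp : c ≤ p r
            · have e1 : T r c ≤ T r (p r) :=
                rowWeak_chain hrow hr (p r) c (by omega) hcp (hp12 r d1 (by omega)).2
              have e2 := hval r d1 d2
              omega
            · have e1 := hmaxi r d1 d2 c (by omega) hcmem.2
              omega
          have h7 : ∑ r' ∈ Finset.Icc 1 r, RowCount lam mu T (s - 1) r'
              = ∑ r' ∈ Finset.Icc 1 (r - 1), RowCount lam mu T (s - 1) r'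
                + RowCount lam mu T (s - 1) r := by
            conv_lhs => rw [show r = (r - 1) + 1 by omega]
            rw [Finset.sum_Icc_succ_top (by omega), show r - 1 + 1 = r by omega]
          split_ifs at h2 <;> omega
      · rw [if_neg hind] at h1
        split_ifs at h2 <;> omega
    -- weight
    have hW : ∀ s, 1 ≤ s → nu s = ∑ r ∈ Finset.Icc 1 n,
        RowCount (decAt lam n) (decAt mu t) (DeleteResult T n t p) s r := by
      intro s hs
      have h1 := hLrel2 s n
      rw [if_neg (by omega)] at h1
      rw [hwt s hs]
      exact h1.symm
    exact ⟨hT0, hTn, t, p, ht1, ht2, hpath, hZ, hR, hC, hL, hW⟩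
  · -- Case (iii)
    intro hnu0 hml
    have hrc3 : ∀ s k, RowCount (decAt lam n) (decAt mu n) T s k = RowCount lam mu T s k := by
      intro s k
      by_cases hk : k = n
      · rcases eq_comm.mp hk with rfl
        unfold RowCount
        rw [decAt_self lam n, decAt_self mu n, Finset.Ioc_eq_empty (by omega),
          Finset.Ioc_eq_empty (by omega)]
      · unfold RowCount
        rw [decAt_eq lam n k hk, decAt_eq mu n k hk]
    refine ⟨?_, ?_, ?_, ?_, ?_⟩
    · intro r c hr hc hcl
      by_cases hrn : r = n
      · rcases eq_comm.mp hrn with rfl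
        rw [decAt_self lam n] at hcl
        have h1 : T n c = 0 := (hzero n c hn hc (by omega)).mpr (by omega)
        rw [decAt_self mu n]
        constructor
        · intro _; omega
        · intro _; exact h1
      · rw [decAt_eq lam n r hrn] at hcl
        rw [decAt_eq mu n r hrn]
        exact hzero r c hr hc hcl
    · intro r c hr hc hcl
      exact hrow r c hr hc (lt_of_lt_of_le hcl (decAt_le lam n r))
    · intro r c hr hmc hcl
      by_cases hrn : r = n
      · rcases eq_comm.mp hrn with rfl
        rw [decAt_eq lam n (n + 1) (by omega), hlen'] at hcl
        exact absurd hcl (by omega)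
      · by_cases hrn1 : r + 1 = n
        · rw [hrn1, decAt_self lam n] at hcl
          rw [decAt_eq mu n r hrn] at hmc
          have : mu n ≤ mu r := partFun_antitone hmu r n hr (by omega)
          exact absurd hcl (by omega)
        · rw [decAt_eq lam n (r + 1) hrn1] at hcl
          rw [decAt_eq mu n r hrn] at hmc
          exact hcol r c hr hmc hcl
    · intro r s hr hs
      rw [Finset.sum_congr rfl (fun i _ => hrc3 s i),
        Finset.sum_congr rfl (fun i _ => hrc3 (s - 1) i)]
      exact hlat r s hr hs
    · intro s hs
      rw [hwt s hs]
      exact (Finset.sum_congr rfl (fun i _ => (hrc3 s i).symm))
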